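/- Let n ≥ 1, let v ∈ ℝⁿ be a unit vector, θ ∈ (−1, 1), and let 𝒦 = {y ∈ ℝⁿ : ⟨y, v⟩ ≥ θ‖y‖} be the corresponding cone. Let K : ℝⁿ → [0, ∞) be measurable with K(z) ≥ c·‖z‖^{(1−n)/2}·exp(−‖z‖) for all ‖z‖ ≥ 1, for some constant c > 0. Let α ≥ 1 and δ satisfy either (α > 1 and δ > 0) or (α = 1 and δ ≥ 1), and let u₀ : ℝⁿ → [0, ∞] be measurable with u₀(y) ≥ C₁·exp(δ‖y‖^α) for all y ∈ 𝒦 with ‖y‖ ≥ R₁, for some constants C₁ > 0 and R₁ > 0. Then for every x ∈ ℝⁿ: ∫_{ℝⁿ} K(x − y) · u₀(y) dy = ∞. -/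

import Mathlib

set_option maxHeartbeats 1000000

open MeasureTheory ENNReal

theorem instantaneous_blowup_superlinear_growth (n : ℕ) (hn : 1 ≤ n)
    (v : EuclideanSpace ℝ (Fin n)) (hv : ‖v‖ = 1)
    (θ : ℝ) (hθ : θ ∈ Set.Ioo (-1 : ℝ) 1)
    (K : EuclideanSpace ℝ (Fin n) → ℝ) (hKmeas : Measurable K)
    (hK0 : ∀ z, 0 ≤ K z) (c : ℝ) (hc : 0 < c)
    (hK1 : ∀ z : EuclideanSpace ℝ (Fin n), 1 ≤ ‖z‖ →
      c * ‖z‖ ^ ((1 - (n : ℝ)) / 2) * Real.exp (-‖z‖) ≤ K z)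
    (α δ : ℝ) (hαδ : (1 < α ∧ 0 < δ) ∨ (α = 1 ∧ 1 ≤ δ))
    (u₀ : EuclideanSpace ℝ (Fin n) → ℝ≥0∞) (hu₀meas : Measurable u₀)
    (C₁ R₁ : ℝ) (hC₁ : 0 < C₁) (hR₁ : 0 < R₁)
    (hgrow : ∀ y : EuclideanSpace ℝ (Fin n),
      θ * ‖y‖ ≤ (inner ℝ y v : ℝ) → R₁ ≤ ‖y‖ →
      ENNReal.ofReal (C₁ * Real.exp (δ * ‖y‖ ^ α)) ≤ u₀ y)
    (x : EuclideanSpace ℝ (Fin n)) :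
    ∫⁻ y, ENNReal.ofReal (K (x - y)) * u₀ y = ⊤ := by
  obtain ⟨hθ1, hθ2⟩ := hθ
  have hn1 : (1:ℝ) ≤ (n:ℝ) := by exact_mod_cast hn
  set p : ℝ := (1 - (n:ℝ))/2 with hpdef
  have hp0 : p ≤ 0 := by rw [hpdef]; linarith
  -- superlinearity threshold
  obtain ⟨T₀, hT₀1, hT₀⟩ : ∃ T₀ : ℝ, 1 ≤ T₀ ∧ ∀ s, T₀ ≤ s → s ≤ δ * s ^ α := by
    rcases hαδ with ⟨hα, hδ⟩ | ⟨hα, hδ⟩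
    · refine ⟨max 1 (δ⁻¹ ^ (α-1)⁻¹), le_max_left _ _, fun s hs => ?_⟩
      have hs1 : (1:ℝ) ≤ s := le_trans (le_max_left _ _) hs
      have hs0 : (0:ℝ) < s := lt_of_lt_of_le one_pos hs1
      have hδ0 : (0:ℝ) ≤ δ⁻¹ := by positivity
      have h1 : δ⁻¹ ≤ s ^ (α - 1) := by
        calc δ⁻¹ = (δ⁻¹ ^ (α-1)⁻¹) ^ (α-1) :=
              (Real.rpow_inv_rpow hδ0 (by linarith)).symm
          _ ≤ s ^ (α-1) :=
              Real.rpow_le_rpow (Real.rpow_nonneg hδ0 _)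
                (le_trans (le_max_right _ _) hs) (by linarith)
      have h2 : s ^ α = s ^ (α - 1) * s := by
        rw [← Real.rpow_add_one hs0.ne' (α-1)]; norm_num
      rw [h2]
      calc s = δ * (δ⁻¹ * s) := by field_simp
        _ ≤ δ * (s ^ (α-1) * s) := by
            apply mul_le_mul_of_nonneg_left _ hδ.le
            exact mul_le_mul_of_nonneg_right h1 hs0.le
    · refine ⟨1, le_refl _, fun s hs => ?_⟩
      rw [hα, Real.rpow_one]; nlinarith
  -- the radius parameter
  have h1θ : (0:ℝ) < 1 + θ := by linarith
  set ρ : ℝ := min 1 (3/2 * (1-θ)/(1+θ)) / 2 with hρdef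
  have hmin0 : 0 < min 1 (3/2 * (1-θ)/(1+θ)) := by
    exact lt_min one_pos (div_pos (by nlinarith) h1θ)
  have hρ0 : 0 < ρ := by rw [hρdef]; linarith
  have hρhalf : ρ ≤ 1/2 := by
    have := min_le_left 1 (3/2 * (1-θ)/(1+θ)); rw [hρdef]; linarith
  have hρθ : ρ * (1+θ) ≤ 3/2 * (1-θ) := by
    have h := min_le_right 1 (3/2 * (1-θ)/(1+θ))
    have hρle : ρ ≤ 3/2 * (1-θ)/(1+θ) := by rw [hρdef]; linarith
    calc ρ * (1+θ) ≤ (3/2 * (1-θ)/(1+θ)) * (1+θ) :=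
          mul_le_mul_of_nonneg_right hρle h1θ.le
      _ = 3/2 * (1-θ) := by field_simp
  set A : ℝ := c * C₁ * Real.exp (-‖x‖) * 3 ^ p * ρ ^ n with hA
  have h3p : (0:ℝ) < 3 ^ p := Real.rpow_pos_of_pos (by norm_num) _
  have hA0 : 0 < A := by
    rw [hA]; positivity
  set V : ℝ≥0∞ := volume (Metric.ball (0 : EuclideanSpace ℝ (Fin n)) 1) with hVdef
  have hV0 : 0 < V := Metric.measure_ball_pos _ _ one_pos
  have hVtop : V ≠ ⊤ := measure_ball_lt_top.ne
  have key : ∀ T : ℝ, max (max T₀ R₁) (‖x‖ + 1) ≤ T →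
      ENNReal.ofReal (A * T) * V ≤ ∫⁻ y, ENNReal.ofReal (K (x - y)) * u₀ y := by
    intro T hT
    have hTT₀ : T₀ ≤ T := le_trans (le_trans (le_max_left _ _) (le_max_left _ _)) hT
    have hTR : R₁ ≤ T := le_trans (le_trans (le_max_right _ _) (le_max_left _ _)) hT
    have hTx : ‖x‖ + 1 ≤ T := le_trans (le_max_right _ _) hT
    have hT1 : (1:ℝ) ≤ T := le_trans hT₀1 hTT₀
    have hT0 : (0:ℝ) < T := lt_of_lt_of_le one_pos hT1
    set z₀prop : EuclideanSpace ℝ (Fin n) := ((3/2 : ℝ) * T) • v with hz₀def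
    set B := Metric.ball z₀prop (ρ * T) with hBdef
    -- pointwise lower bound on the ball
    have hball : ∀ y ∈ B,
        ENNReal.ofReal (c * C₁ * Real.exp (-‖x‖) * (3*T) ^ p)
          ≤ ENNReal.ofReal (K (x - y)) * u₀ y := by
      intro y hy
      have hw : ‖y - z₀prop‖ < ρ * T := by
        rw [hBdef, Metric.mem_ball, dist_eq_norm] at hy; exact hy
      have hz₀norm : ‖z₀prop‖ = 3/2 * T := by
        rw [hz₀def, norm_smul, hv, mul_one, Real.norm_eq_abs, abs_of_nonneg (by linarith)]
      have hρT : ρ * T ≤ T/2 := by nlinarith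
      have hylb : T ≤ ‖y‖ := by
        have h := norm_sub_norm_le y z₀prop
        rw [hz₀norm] at h
        have h2 := norm_sub_norm_le z₀prop y
        rw [hz₀norm, ← norm_neg (z₀prop - y)] at h2
        simp only [neg_sub] at h2
        linarith
      have hyub : ‖y‖ ≤ (3/2 + ρ) * T := by
        have h := norm_le_norm_add_norm_sub' y z₀prop
        have h' : ‖y‖ ≤ ‖z₀prop‖ + ‖y - z₀prop‖ := by
          have heq : z₀prop + (y - z₀prop) = y := by abel
          calc ‖y‖ = ‖z₀prop + (y - z₀prop)‖ := by rw [heq]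
            _ ≤ ‖z₀prop‖ + ‖y - z₀prop‖ := norm_add_le _ _
        rw [hz₀norm] at h'
        nlinarith
      have hy2T : ‖y‖ ≤ 2 * T := by nlinarith
      have hinner : (3/2 - ρ) * T ≤ (inner ℝ y v : ℝ) := by
        have h1 : (inner ℝ z₀prop v : ℝ) = 3/2 * T := by
          rw [hz₀def, real_inner_smul_left, real_inner_self_eq_norm_mul_norm, hv]
          ring
        have h2 : |(inner ℝ (y - z₀prop) v : ℝ)| ≤ ‖y - z₀prop‖ := by
          have := abs_real_inner_le_norm (y - z₀prop) v
          rwa [hv, mul_one] at this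
        have h3 : (inner ℝ y v : ℝ) = inner ℝ z₀prop v + (inner ℝ (y - z₀prop) v : ℝ) := by
          have heq : z₀prop + (y - z₀prop) = y := by abel
          rw [← inner_add_left, heq]
        have h4 := abs_le.mp h2
        rw [h3, h1]
        nlinarith [h4.1]
      have hcone : θ * ‖y‖ ≤ (inner ℝ y v : ℝ) := by
        rcases le_or_gt θ 0 with hth | hth
        · have h5 : θ * ‖y‖ ≤ 0 := mul_nonpos_of_nonpos_of_nonneg hth (norm_nonneg _)
          have : (0:ℝ) ≤ (3/2 - ρ) * T := by nlinarith
          linarith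
        · have h5 : θ * ‖y‖ ≤ θ * ((3/2 + ρ) * T) :=
            mul_le_mul_of_nonneg_left hyub hth.le
          have h6 : θ * ((3/2 + ρ) * T) ≤ (3/2 - ρ) * T := by nlinarith
          linarith
      have hu : ENNReal.ofReal (C₁ * Real.exp ‖y‖) ≤ u₀ y := by
        refine le_trans ?_ (hgrow y hcone (le_trans hTR hylb))
        apply ENNReal.ofReal_le_ofReal
        apply mul_le_mul_of_nonneg_left _ hC₁.le
        exact Real.exp_le_exp.mpr (hT₀ ‖y‖ (le_trans hTT₀ hylb))
      have hxy1 : (1:ℝ) ≤ ‖x - y‖ := by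
        have h := norm_sub_norm_le y x
        have : ‖y - x‖ = ‖x - y‖ := norm_sub_rev _ _
        linarith
      have hxy3 : ‖x - y‖ ≤ 3 * T := by
        have := norm_sub_le x y
        linarith
      have hKb : c * (3*T) ^ p * Real.exp (-‖x - y‖) ≤ K (x - y) := by
        refine le_trans ?_ (hK1 _ hxy1)
        have hpow : (3*T) ^ p ≤ ‖x - y‖ ^ p :=
          Real.rpow_le_rpow_of_nonpos (lt_of_lt_of_le one_pos hxy1) hxy3 hp0
        have he : (0:ℝ) ≤ Real.exp (-‖x - y‖) := (Real.exp_pos _).le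
        exact mul_le_mul_of_nonneg_right (mul_le_mul_of_nonneg_left hpow hc.le) he
      have hexp : Real.exp (-‖x‖) ≤ Real.exp (-‖x - y‖) * Real.exp ‖y‖ := by
        rw [← Real.exp_add]
        apply Real.exp_le_exp.mpr
        have := norm_sub_le x y
        linarith
      calc ENNReal.ofReal (c * C₁ * Real.exp (-‖x‖) * (3*T) ^ p)
          ≤ ENNReal.ofReal ((c * (3*T) ^ p * Real.exp (-‖x - y‖)) * (C₁ * Real.exp ‖y‖)) := by
            apply ENNReal.ofReal_le_ofReal
            have h3T : (0:ℝ) < (3*T) ^ p := Real.rpow_pos_of_pos (by linarith) _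
            nlinarith [mul_le_mul_of_nonneg_left hexp
              (by positivity : (0:ℝ) ≤ c * C₁ * (3*T) ^ p)]
        _ = ENNReal.ofReal (c * (3*T) ^ p * Real.exp (-‖x - y‖))
            * ENNReal.ofReal (C₁ * Real.exp ‖y‖) := by
            apply ENNReal.ofReal_mul
            have h3T : (0:ℝ) < (3*T) ^ p := Real.rpow_pos_of_pos (by linarith) _
            positivity
        _ ≤ ENNReal.ofReal (K (x - y)) * u₀ y :=
            mul_le_mul' (ENNReal.ofReal_le_ofReal hKb) hu
    -- measure of the ball
    have hvolB : volume B = ENNReal.ofReal ((ρ * T) ^ n) * V := by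
      rw [hBdef, Measure.addHaar_ball_of_pos volume z₀prop (by positivity),
        finrank_euclideanSpace_fin]
    -- the real-number inequality
    have h3T : (0:ℝ) < (3*T) ^ p := Real.rpow_pos_of_pos (by linarith) _
    have hTle : A * T ≤ (c * C₁ * Real.exp (-‖x‖) * (3*T) ^ p) * (ρ * T) ^ n := by
      have e1 : (3*T) ^ p = 3 ^ p * T ^ p := Real.mul_rpow (by norm_num) hT0.le
      have e2 : (ρ * T) ^ n = ρ ^ n * T ^ (n:ℝ) := by
        rw [mul_pow, Real.rpow_natCast]
      have e3 : T ^ p * T ^ (n:ℝ) = T ^ (p + (n:ℝ)) := (Real.rpow_add hT0 _ _).symm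
      have e4 : T ≤ T ^ (p + (n:ℝ)) := by
        nth_rewrite 1 [← Real.rpow_one T]
        apply Real.rpow_le_rpow_of_exponent_le hT1
        rw [hpdef]; linarith
      calc A * T = (c * C₁ * Real.exp (-‖x‖) * 3 ^ p * ρ ^ n) * T := by rw [hA]
        _ ≤ (c * C₁ * Real.exp (-‖x‖) * 3 ^ p * ρ ^ n) * T ^ (p + (n:ℝ)) := by
            apply mul_le_mul_of_nonneg_left e4 (by positivity)
        _ = (c * C₁ * Real.exp (-‖x‖) * (3 ^ p * T ^ p)) * (ρ ^ n * T ^ (n:ℝ)) := by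
            rw [← e3]; ring
        _ = (c * C₁ * Real.exp (-‖x‖) * (3*T) ^ p) * (ρ * T) ^ n := by
            rw [e1, e2]
    calc ENNReal.ofReal (A * T) * V
        ≤ ENNReal.ofReal ((c * C₁ * Real.exp (-‖x‖) * (3*T) ^ p) * (ρ * T) ^ n) * V :=
          mul_le_mul' (ENNReal.ofReal_le_ofReal hTle) le_rfl
      _ = ENNReal.ofReal (c * C₁ * Real.exp (-‖x‖) * (3*T) ^ p) * volume B := by
          rw [hvolB, ENNReal.ofReal_mul (by positivity), mul_assoc]
      _ = ∫⁻ _ in B, ENNReal.ofReal (c * C₁ * Real.exp (-‖x‖) * (3*T) ^ p) :=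
          (setLIntegral_const _ _).symm
      _ ≤ ∫⁻ y in B, ENNReal.ofReal (K (x - y)) * u₀ y :=
          setLIntegral_mono' measurableSet_ball hball
      _ ≤ ∫⁻ y, ENNReal.ofReal (K (x - y)) * u₀ y :=
          setLIntegral_le_lintegral _ _
  -- conclude
  by_contra hne
  set S := ∫⁻ y, ENNReal.ofReal (K (x - y)) * u₀ y with hSdef
  have hVt0 : 0 < V.toReal := ENNReal.toReal_pos hV0.ne' hVtop
  set T : ℝ := max (max (max T₀ R₁) (‖x‖ + 1)) ((S.toReal + 1) / (A * V.toReal)) with hTdef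
  have h := key T (le_max_left _ _)
  have hT1 : (1:ℝ) ≤ T :=
    le_trans hT₀1 (((le_max_left _ _).trans (le_max_left _ _)).trans (le_max_left _ _))
  have h2 : ENNReal.ofReal (A * T * V.toReal) ≤ S := by
    rw [ENNReal.ofReal_mul (by positivity), ENNReal.ofReal_toReal hVtop]
    exact h
  have h3 : A * T * V.toReal ≤ S.toReal := by
    have := ENNReal.toReal_mono hne h2
    rwa [ENNReal.toReal_ofReal (by positivity)] at this
  have hTbig : (S.toReal + 1) / (A * V.toReal) ≤ T := le_max_right _ _
  rw [div_le_iff₀ (by positivity)] at hTbig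
  nlinarith
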